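/- Let a_1,...,a_m be transpositions in S_{2n+1} of the form a_i = (α_i, 2n+1), and let π be the partition of {1,...,m} whose blocks group equal transpositions (j and k are in the same block iff a_j = a_k). Assume π is a pair partition (every block has exactly two elements). Then the product a_1 a_2 ⋯ a_m is the identity permutation if and only if π is non-crossing. -/

import Mathlib

namespace JM

/-- A collection of sets is a partition of `Fin m`. -/
def IsPartitionOn {m : ℕ} (π : Set (Set (Fin m))) : Prop :=
  (∀ B ∈ π, B.Nonempty) ∧ (∀ x : Fin m, ∃ B ∈ π, x ∈ B) ∧
  (∀ B ∈ π, ∀ B' ∈ π, (B ∩ B').Nonempty → B = B')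

/-- The partition is non-crossing. -/
def Noncrossing {m : ℕ} (π : Set (Set (Fin m))) : Prop :=
  ∀ B ∈ π, ∀ B' ∈ π, B ≠ B' →
    ¬ ∃ k1 l1 k2 l2 : Fin m, k1 < l1 ∧ l1 < k2 ∧ k2 < l2 ∧
      k1 ∈ B ∧ k2 ∈ B ∧ l1 ∈ B' ∧ l2 ∈ B'

/-- `B` is an inner block of `B'`. -/
def Inner {m : ℕ} (B B' : Set (Fin m)) : Prop :=
  (∃ p ∈ B', ∀ b ∈ B, p < b) ∧ (∃ q ∈ B', ∀ b ∈ B, b < q)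

/-- `B` is a direct inner block of `B''` in π. -/
def DirectInner {m : ℕ} (π : Set (Set (Fin m))) (B B'' : Set (Fin m)) : Prop :=
  Inner B B'' ∧ ¬ ∃ B' ∈ π, Inner B B' ∧ Inner B' B''

/-- Non-crossing partitions with blocks of size 1 or 2, each singleton inner to a 2-block. -/
def NC1lt2 (m : ℕ) : Set (Set (Set (Fin m))) :=
  {π | IsPartitionOn π ∧ Noncrossing π ∧ (∀ B ∈ π, B.ncard = 1 ∨ B.ncard = 2) ∧
    ∀ B ∈ π, B.ncard = 1 → ∃ B' ∈ π, B'.ncard = 2 ∧ Inner B B'}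

/-- Non-crossing partitions all of whose blocks have size at least two. -/
def NCge2 (m : ℕ) : Set (Set (Set (Fin m))) :=
  {π | IsPartitionOn π ∧ Noncrossing π ∧ ∀ B ∈ π, 2 ≤ B.ncard}

/-- The merging map `F`: each 2-block is merged with its direct inner singletons. -/
def Fmap {m : ℕ} (π : Set (Set (Fin m))) : Set (Set (Fin m)) :=
  {C | ∃ B ∈ π, B.ncard = 2 ∧
    C = B ∪ {x | ∃ S ∈ π, S = {x} ∧ DirectInner π S B}}

/-- The splitting map `G`: from each block of size at least 3, every element except the
minimum and the maximum is placed in its own singleton block. -/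
def Gmap {m : ℕ} (π : Set (Set (Fin m))) : Set (Set (Fin m)) :=
  {C | (∃ B ∈ π, B.ncard ≤ 2 ∧ C = B) ∨
    (∃ B ∈ π, 3 ≤ B.ncard ∧ ∃ x ∈ B, (∃ y ∈ B, y < x) ∧ (∃ z ∈ B, x < z) ∧ C = {x}) ∨
    (∃ B ∈ π, 3 ≤ B.ncard ∧ ∃ y ∈ B, ∃ z ∈ B,
      (∀ b ∈ B, y ≤ b) ∧ (∀ b ∈ B, b ≤ z) ∧ C = {y, z})}

/-- Minimal number of transpositions needed to write σ as a product. -/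
noncomputable def permLength {β : Type*} [DecidableEq β] [Fintype β] (σ : Equiv.Perm β) : ℕ :=
  sInf {k | ∃ l : List (Equiv.Perm β), l.length = k ∧ (∀ t ∈ l, t.IsSwap) ∧ l.prod = σ}

/-- The element 2n+1 of {1,…,2n+1}. -/
def jmTop (n : ℕ) : Fin (2*n+1) := Fin.last (2*n)

/-- The tuple of Jucys-Murphy transpositions (αᵢ, 2n+1). -/
def jmTuple {n m : ℕ} (α : Fin m → Fin (2*n+1)) : Fin m → Equiv.Perm (Fin (2*n+1)) :=
  fun i => Equiv.swap (α i) (jmTop n)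

/-- The partition of indices grouping equal values of α. -/
def eqPartition {m : ℕ} {β : Type*} (α : Fin m → β) : Set (Set (Fin m)) :=
  {B | ∃ j : Fin m, B = {i | α i = α j}}

/-- A partition respects a two-coloring. -/
def Respects {m : ℕ} (π : Set (Set (Fin m))) (c : Fin m → Bool) : Prop :=
  ∀ B ∈ π, ∀ i ∈ B, ∀ j ∈ B, c i = c j

/-- Membership in the subgroup S_n × S_n × {e} of S_{2n+1}. -/
def InH (n : ℕ) (σ : Equiv.Perm (Fin (2*n+1))) : Prop :=
  (∀ x : Fin (2*n+1), (x:ℕ) < n → ((σ x : Fin (2*n+1)) : ℕ) < n) ∧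
  (∀ x : Fin (2*n+1), n ≤ (x:ℕ) → (x:ℕ) < 2*n →
    n ≤ ((σ x : Fin (2*n+1)) : ℕ) ∧ ((σ x : Fin (2*n+1)) : ℕ) < 2*n) ∧
  σ (jmTop n) = jmTop n

def e1 (n : ℕ) : Fin n ≃ {x : Fin (2*n+1) // (x:ℕ) < n} where
  toFun i := ⟨⟨i, by omega⟩, i.isLt⟩
  invFun x := ⟨(x.1 : ℕ), x.2⟩
  left_inv i := rfl
  right_inv x := rfl

def e2 (n : ℕ) : Fin n ≃ {x : Fin (2*n+1) // n ≤ (x:ℕ) ∧ (x:ℕ) < 2*n} where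
  toFun i := ⟨⟨n + i, by omega⟩, by simp only [Fin.val_mk]; omega⟩
  invFun x := ⟨(x.1 : ℕ) - n, by have := x.2; omega⟩
  left_inv i := by ext; simp
  right_inv x := by
    rcases x with ⟨x, hx⟩
    exact Subtype.ext (Fin.ext (by simp; omega))

/-- Embed a permutation of `Fin n` as a permutation of `Fin (2n+1)` acting on {1,…,n}. -/
def lift1 {n : ℕ} (τ : Equiv.Perm (Fin n)) : Equiv.Perm (Fin (2*n+1)) :=
  τ.extendDomain (e1 n)

/-- Embed a permutation of `Fin n` as a permutation of `Fin (2n+1)` acting on {n+1,…,2n}. -/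
def lift2 {n : ℕ} (τ : Equiv.Perm (Fin n)) : Equiv.Perm (Fin (2*n+1)) :=
  τ.extendDomain (e2 n)

section ListLemmas

lemma countP_eq_sum {γ : Type*} (q : γ → Bool) (l : List γ) :
    l.countP q = (l.map fun b => if q b then 1 else 0).sum := by
  induction l with
  | nil => rfl
  | cons b t ih =>
    rw [List.countP_cons]
    simp only [List.map_cons, List.sum_cons, ih]
    by_cases h : q b <;> simp [h] <;> omega

variable {β : Type*} [DecidableEq β]

def Pr (x : β) (l : List β) : Equiv.Perm β := (l.map fun a => Equiv.swap a x).prod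

@[simp] lemma Pr_nil (x : β) : Pr x [] = 1 := rfl
@[simp] lemma Pr_cons (x a : β) (l : List β) : Pr x (a :: l) = Equiv.swap a x * Pr x l := by
  simp [Pr]
lemma Pr_append (x : β) (l1 l2 : List β) : Pr x (l1 ++ l2) = Pr x l1 * Pr x l2 := by
  simp [Pr]

lemma Pr_fix {x c : β} (hc : c ≠ x) : ∀ {l : List β}, c ∉ l → Pr x l c = c := by
  intro l
  induction l with
  | nil => simp
  | cons a t ih =>
    intro h
    simp only [List.mem_cons, not_or] at h
    simp only [Pr_cons, Equiv.Perm.mul_apply, ih h.2]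
    exact Equiv.swap_apply_of_ne_of_ne (Ne.symm (by exact fun e => h.1 e.symm)) hc

def NCl (l : List β) : Prop :=
  ∀ i1 j1 i2 j2 : ℕ, ∀ _h : j2 < l.length, ∀ _h1 : i1 < j1, ∀ _h2 : j1 < i2, ∀ _h3 : i2 < j2,
    l[i1]'(by omega) = l[i2]'(by omega) → l[j1]'(by omega) = l[j2] →
    l[i1]'(by omega) = l[j1]'(by omega)

lemma count_decomp {x y : β} {A B C : List β} (hx : x ∉ A ++ y :: (B ++ y :: C))
    (hc : ∀ a ∈ A ++ y :: (B ++ y :: C), (A ++ y :: (B ++ y :: C)).count a = 2) :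
    y ∉ A ∧ y ∉ B ∧ y ∉ C ∧ y ≠ x := by
  have hy : y ∈ A ++ y :: (B ++ y :: C) := by simp
  have h2 := hc y hy
  simp only [List.count_append, List.count_cons_self, List.count_cons] at h2
  have hA : A.count y = 0 := by omega
  have hB : B.count y = 0 := by omega
  have hC : C.count y = 0 := by omega
  refine ⟨by simpa using List.count_eq_zero.mp hA, by simpa using List.count_eq_zero.mp hB,
    by simpa using List.count_eq_zero.mp hC, fun e => hx (e ▸ hy)⟩

lemma core_adjacent (x : β) (l : List β) (hx : x ∉ l) (hc : ∀ a ∈ l, l.count a = 2)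
    (h1 : Pr x l = 1) (hne : l ≠ []) : ∃ A y C, l = A ++ y :: y :: C := by
  classical
  set Q : ℕ → Prop := fun d => ∃ A y B C, l = A ++ y :: (B ++ y :: C) ∧ B.length = d with hQ
  have hex : ∃ d, Q d := by
    obtain ⟨y, t, rfl⟩ := List.exists_cons_of_ne_nil hne
    have h2 := hc y (by simp)
    rw [List.count_cons_self] at h2
    have : y ∈ t := List.count_pos_iff.mp (by omega)
    obtain ⟨s, u, rfl⟩ := List.append_of_mem this
    exact ⟨s.length, [], y, s, u, by simp, rfl⟩
  obtain ⟨A, y, B, C, hl, hB⟩ := Nat.find_spec hex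
  subst hl
  obtain ⟨hyA, hyB, hyC, hyx⟩ := count_decomp hx hc
  have hxB : x ∉ B := fun h => hx (by simp [h])
  rcases Nat.eq_zero_or_pos (Nat.find hex) with h0 | hpos
  · rw [h0] at hB
    rw [List.length_eq_zero_iff.mp hB]
    exact ⟨A, y, C, by simp⟩
  · exfalso
    have hy : Pr x (A ++ y :: (B ++ y :: C)) y = y := by rw [h1]; rfl
    rw [Pr_append, Pr_cons, Pr_append, Pr_cons] at hy
    simp only [Equiv.Perm.mul_apply] at hy
    rw [Pr_fix hyx hyC, Equiv.swap_apply_left] at hy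
    by_cases hzx : Pr x B x = x
    · -- B ends with a repeated element
      rcases B.eq_nil_or_concat with rfl | ⟨B', b, rfl⟩
      · simp only [List.length_nil] at hB; omega
      have hbx : b ≠ x := fun e => hxB (by simp [e])
      rw [List.concat_eq_append, Pr_append] at hzx
      simp only [Equiv.Perm.mul_apply, Pr_cons, Pr_nil, mul_one,
        Equiv.swap_apply_right] at hzx
      have hbB' : b ∈ B' := by
        by_contra hb
        exact hbx (by rw [Pr_fix hbx hb] at hzx; exact hzx)
      obtain ⟨A'', C'', rfl⟩ := List.append_of_mem hbB'
      have hlt : C''.length < Nat.find hex := by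
        have := hB; simp at this; omega
      exact Nat.find_min hex hlt ⟨A ++ y :: A'', b, C'', y :: C, by simp, rfl⟩
    · have hzy : Pr x B x ≠ y := by
        intro e
        have h' : Pr x B y = y := Pr_fix hyx hyB
        exact hyx ((Pr x B).injective (by rw [h', e])).symm
      rw [Equiv.swap_apply_of_ne_of_ne hzy hzx] at hy
      have : Pr x A y = y := Pr_fix hyx hyA
      exact hzy ((Pr x A).injective (hy.trans this.symm))

def Crossing (l : List β) : Prop :=
  ∃ i1 j1 i2 j2 : ℕ, ∃ _h1 : i1 < j1, ∃ _h2 : j1 < i2, ∃ _h3 : i2 < j2, ∃ h4 : j2 < l.length,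
    l[i1]'(by omega) = l[i2]'(by omega) ∧ l[j1]'(by omega) = l[j2]'h4 ∧
    l[i1]'(by omega) ≠ l[j1]'(by omega)

set_option linter.unusedSectionVars false

lemma getElem_big (A C : List β) (y : β) (q : ℕ) (hq : q < A.length + 2 + C.length) :
    (A ++ y :: y :: C)[q]'(by simp; omega) =
      if h : q < A.length then A[q] else
        if h2 : q ≤ A.length + 1 then y else C[q - A.length - 2]'(by omega) := by
  by_cases h : q < A.length
  · rw [List.getElem_append_left h]; simp [h]
  · rw [List.getElem_append_right (by omega)]
    by_cases h2 : q ≤ A.length + 1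
    · rcases Nat.lt_or_ge q (A.length + 1) with h3 | h3
      · obtain ⟨k, hk⟩ : ∃ k, q - A.length = 0 := ⟨0, by omega⟩
        simp [hk, h, h2]
      · have hk : q - A.length = 1 := by omega
        simp [hk, h, h2]
    · obtain ⟨k, hk⟩ : ∃ k, q - A.length = k + 2 := ⟨q - A.length - 2, by omega⟩
      simp only [hk, List.getElem_cons_succ]
      simp only [dif_neg h, dif_neg h2]
      congr 1
      all_goals omega

lemma getElem_small (A C : List β) (q : ℕ) (hq : q < A.length + C.length) :
    (A ++ C)[q]'(by simp; omega) =
      if h : q < A.length then A[q] else C[q - A.length]'(by omega) := by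
  by_cases h : q < A.length
  · rw [List.getElem_append_left h]; simp [h]
  · rw [List.getElem_append_right (by omega)]; simp [h]

lemma cross_up {y : β} {A C : List β} (h : Crossing (A ++ C)) : Crossing (A ++ y :: y :: C) := by
  obtain ⟨i1, j1, i2, j2, h1, h2, h3, h4, e1, e2, ne⟩ := h
  rw [List.length_append] at h4
  have key : ∀ p : ℕ, ∀ _hp : p < A.length + C.length,
      (A ++ y :: y :: C)[if p < A.length then p else p + 2]'(by split <;> (simp; omega)) =
      (A ++ C)[p]'(by simp; omega) := by
    intro p hp
    rw [getElem_small A C p hp]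
    by_cases hpa : p < A.length
    · simp only [if_pos hpa, dif_pos hpa]
      rw [getElem_big A C y p (by omega)]
      simp [hpa]
    · simp only [if_neg hpa, dif_neg hpa]
      rw [getElem_big A C y (p + 2) (by omega)]
      have hc1 : ¬ (p + 2 < A.length) := by omega
      have hc2 : ¬ (p + 2 ≤ A.length + 1) := by omega
      simp only [dif_neg hc1, dif_neg hc2]
      congr 1
      omega
  have mono : ∀ p q : ℕ, p < q →
      (if p < A.length then p else p + 2) < (if q < A.length then q else q + 2) := by
    intro p q hpq; split <;> split <;> omega
  refine ⟨_, _, _, _, mono _ _ h1, mono _ _ h2, mono _ _ h3,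
    (by simp; split <;> omega), ?_, ?_, ?_⟩
  · rw [key i1 (by omega), key i2 (by omega)]; exact e1
  · rw [key j1 (by omega), key j2 (by omega)]; exact e2
  · rw [key i1 (by omega), key j1 (by omega)]; exact ne

lemma cross_down {y : β} {A C : List β} (hyA : y ∉ A) (hyC : y ∉ C)
    (h : Crossing (A ++ y :: y :: C)) : Crossing (A ++ C) := by
  obtain ⟨i1, j1, i2, j2, h1, h2, h3, h4, e1, e2, ne⟩ := h
  have hlen : j2 < A.length + 2 + C.length := by
    simp only [List.length_append, List.length_cons] at h4; omega
  have hy : ∀ q : ℕ, ∀ hq : q < A.length + 2 + C.length,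
      (A ++ y :: y :: C)[q]'(by simp; omega) = y → A.length ≤ q ∧ q ≤ A.length + 1 := by
    intro q hq e
    rw [getElem_big A C y q hq] at e
    by_cases hq1 : q < A.length
    · rw [dif_pos hq1] at e
      exact (hyA (show y ∈ A by rw [← e]; exact List.getElem_mem _)).elim
    · constructor
      · omega
      · by_contra hq2
        rw [dif_neg hq1, dif_neg (by omega)] at e
        exact hyC (by rw [← e]; exact List.getElem_mem _)
  have hmid : ∀ q : ℕ, ∀ _h1 : A.length ≤ q, ∀ _h2 : q ≤ A.length + 1,
      ∀ hq : q < A.length + 2 + C.length, (A ++ y :: y :: C)[q]'(by simp; omega) = y := by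
    intro q hq1 hq2 hq
    rw [getElem_big A C y q hq, dif_neg (by omega), dif_pos (by omega)]
  have o1 : i1 < A.length ∨ A.length + 2 ≤ i1 := by
    by_contra hc
    have h5 : (A ++ y :: y :: C)[i2]'(by simp; omega) = y := by
      rw [← e1]; exact hmid i1 (by omega) (by omega) (by omega)
    have := hy i2 (by omega) h5
    omega
  have o3 : i2 < A.length ∨ A.length + 2 ≤ i2 := by
    by_contra hc
    have h5 : (A ++ y :: y :: C)[i1]'(by omega) = y := by
      rw [e1]; exact hmid i2 (by omega) (by omega) (by omega)
    have := hy i1 (by omega) h5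
    omega
  have o2 : j1 < A.length ∨ A.length + 2 ≤ j1 := by
    by_contra hc
    have h5 : (A ++ y :: y :: C)[j2]'(by simp; omega) = y := by
      rw [← e2]; exact hmid j1 (by omega) (by omega) (by omega)
    have := hy j2 (by omega) h5
    omega
  have o4 : j2 < A.length ∨ A.length + 2 ≤ j2 := by
    by_contra hc
    have h5 : (A ++ y :: y :: C)[j1]'(by omega) = y := by
      rw [e2]; exact hmid j2 (by omega) (by omega) (by omega)
    have := hy j1 (by omega) h5
    omega
  have val : ∀ p : ℕ, ∀ _hp1 : p < A.length + 2 + C.length,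
      ∀ _hp2 : p < A.length ∨ A.length + 2 ≤ p,
      (A ++ C)[if p < A.length then p else p - 2]'(by split <;> (simp; omega)) =
        (A ++ y :: y :: C)[p]'(by simp; omega) := by
    intro p hp1 hp2
    rw [getElem_big A C y p hp1]
    by_cases hpa : p < A.length
    · simp only [if_pos hpa, dif_pos hpa]
      rw [getElem_small A C p (by omega)]
      simp [hpa]
    · simp only [if_neg hpa, dif_neg hpa, dif_neg (show ¬ p ≤ A.length + 1 by omega)]
      rw [getElem_small A C (p - 2) (by omega)]
      rw [dif_neg (show ¬ p - 2 < A.length by omega)]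
      congr 1
      omega
  have mono : ∀ p q : ℕ, ∀ _h : p < q, ∀ _hp : p < A.length ∨ A.length + 2 ≤ p,
      ∀ _hq : q < A.length ∨ A.length + 2 ≤ q,
      (if p < A.length then p else p - 2) < (if q < A.length then q else q - 2) := by
    intro p q hpq hp hq; split <;> split <;> omega
  refine ⟨_, _, _, _, mono _ _ h1 o1 o2, mono _ _ h2 o2 o3, mono _ _ h3 o3 o4,
    (by simp only [List.length_append]; split <;> omega), ?_, ?_, ?_⟩
  · rw [val i1 (by omega) o1, val i2 (by omega) o3]; exact e1
  · rw [val j1 (by omega) o2, val j2 (by omega) o4]; exact e2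
  · rw [val i1 (by omega) o1, val j1 (by omega) o2]; exact ne

lemma getElem_concat_len (A t : List β) (y : β) : (A ++ y :: t)[A.length]'(by simp) = y := by
  rw [List.getElem_append_right (le_refl _)]
  simp

lemma getElem_mid' (A t : List β) (y : β) (k : ℕ) (hk : k < t.length) :
    (A ++ y :: t)[A.length + 1 + k]'(by simp; omega) = t[k] := by
  rw [List.getElem_append_right (by omega)]
  have h : A.length + 1 + k - A.length = k + 1 := by omega
  simp [h]

lemma crossing_pattern (u v : β) (hne : u ≠ v) (P Q R S T : List β) :
    Crossing (P ++ u :: (Q ++ v :: (R ++ u :: (S ++ v :: T)))) := by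
  refine ⟨P.length, P.length + 1 + Q.length, P.length + 1 + (Q.length + 1 + R.length),
    P.length + 1 + (Q.length + 1 + (R.length + 1 + S.length)),
    by omega, by omega, by omega, by simp; omega, ?_, ?_, ?_⟩
  · rw [getElem_concat_len, getElem_mid' P _ u _ (by simp only [List.length_append, List.length_cons]; omega),
      getElem_mid' Q _ v _ (by simp only [List.length_append, List.length_cons]; omega), getElem_concat_len]
  · rw [getElem_mid' P _ u _ (by simp only [List.length_append, List.length_cons]; omega), getElem_concat_len,
      getElem_mid' P _ u _ (by simp only [List.length_append, List.length_cons]; omega),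
      getElem_mid' Q _ v _ (by simp only [List.length_append, List.length_cons]; omega),
      getElem_mid' R _ u _ (by simp only [List.length_append, List.length_cons]; omega), getElem_concat_len]
  · rw [getElem_concat_len, getElem_mid' P _ u _ (by simp only [List.length_append, List.length_cons]; omega), getElem_concat_len]
    exact hne

inductive Red : List β → Prop
  | nil : Red []
  | cons (A : List β) (y : β) (C : List β) : Red (A ++ C) → Red (A ++ y :: y :: C)

lemma Pr_red (x : β) {l : List β} (h : Red l) : Pr x l = 1 := by
  induction h with
  | nil => rfl
  | cons A y C _ ih =>
    rw [Pr_append, Pr_cons, Pr_cons, ← mul_assoc (Equiv.swap y x), Equiv.swap_mul_self,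
      one_mul, ← Pr_append, ih]

lemma counts_remove {y : β} {A C : List β}
    (hc : ∀ a ∈ A ++ y :: y :: C, (A ++ y :: y :: C).count a = 2) :
    (∀ a ∈ A ++ C, (A ++ C).count a = 2) ∧ y ∉ A ++ C := by
  have hy := hc y (by simp)
  simp only [List.count_append, List.count_cons_self, List.count_cons] at hy
  have hyA : A.count y = 0 := by omega
  have hyC : C.count y = 0 := by omega
  have hyAC : y ∉ A ++ C := by
    rw [List.mem_append]
    push_neg
    exact ⟨List.count_eq_zero.mp hyA, List.count_eq_zero.mp hyC⟩
  refine ⟨?_, hyAC⟩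
  intro a ha
  have hne : a ≠ y := fun e => hyAC (e ▸ ha)
  have h2 := hc a (by rcases List.mem_append.mp ha with h | h <;> simp [h])
  have e : (y :: y :: C).count a = C.count a := by simp [List.count_cons, hne, Ne.symm hne]
  rw [List.count_append, e] at h2
  rw [List.count_append]
  exact h2

lemma red_of_pr (x : β) : ∀ N, ∀ l : List β, l.length ≤ N → x ∉ l →
    (∀ a ∈ l, l.count a = 2) → Pr x l = 1 → Red l := by
  intro N
  induction N with
  | zero =>
    intro l hl _ _ _
    have e : l = [] := List.length_eq_zero_iff.mp (Nat.le_zero.mp hl)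
    subst e
    exact Red.nil
  | succ N ih =>
    intro l hl hx hc h1
    rcases eq_or_ne l [] with rfl | hne
    · exact Red.nil
    obtain ⟨A, y, C, rfl⟩ := core_adjacent x l hx hc h1 hne
    have hrem := counts_remove hc
    have hx' : x ∉ A ++ C := by
      intro h
      rcases List.mem_append.mp h with h | h
      · exact hx (by simp [h])
      · exact hx (by simp [h])
    have hlen : (A ++ C).length ≤ N := by
      simp only [List.length_append, List.length_cons] at hl ⊢; omega
    have h1' : Pr x (A ++ C) = 1 := by
      rw [Pr_append, Pr_cons, Pr_cons, ← mul_assoc (Equiv.swap y x), Equiv.swap_mul_self,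
        one_mul, ← Pr_append] at h1
      exact h1
    exact Red.cons A y C (ih _ hlen hx' hrem.1 h1')

lemma ncl_of_red {l : List β} (h : Red l) (hc : ∀ a ∈ l, l.count a = 2) : ¬ Crossing l := by
  induction h with
  | nil =>
    rintro ⟨i1, j1, i2, j2, h1, h2, h3, h4, -⟩
    simp at h4
  | cons A y C _ ih =>
    intro hcr
    have hrem := counts_remove hc
    have hyA : y ∉ A := fun h => hrem.2 (List.mem_append.mpr (Or.inl h))
    have hyC : y ∉ C := fun h => hrem.2 (List.mem_append.mpr (Or.inr h))
    exact ih hrem.1 (cross_down hyA hyC hcr)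

lemma count_decomp2 {y : β} {A B C : List β}
    (hc : ∀ a ∈ A ++ y :: (B ++ y :: C), (A ++ y :: (B ++ y :: C)).count a = 2) :
    y ∉ A ∧ y ∉ B ∧ y ∉ C := by
  have hy : y ∈ A ++ y :: (B ++ y :: C) := by simp
  have h2 := hc y hy
  simp only [List.count_append, List.count_cons_self, List.count_cons] at h2
  have hA : A.count y = 0 := by omega
  have hB : B.count y = 0 := by omega
  have hC : C.count y = 0 := by omega
  exact ⟨by simpa using List.count_eq_zero.mp hA, by simpa using List.count_eq_zero.mp hB,
    by simpa using List.count_eq_zero.mp hC⟩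

lemma adjacent_of_ncl (l : List β) (hc : ∀ a ∈ l, l.count a = 2) (hncl : ¬ Crossing l)
    (hne : l ≠ []) : ∃ A y C, l = A ++ y :: y :: C := by
  classical
  have hex : ∃ d, ∃ A y B C, l = A ++ y :: (B ++ y :: C) ∧ B.length = d := by
    obtain ⟨y, t, rfl⟩ := List.exists_cons_of_ne_nil hne
    have h2 := hc y (by simp)
    rw [List.count_cons_self] at h2
    have hyt : y ∈ t := List.count_pos_iff.mp (by omega)
    obtain ⟨s, u, rfl⟩ := List.append_of_mem hyt
    exact ⟨s.length, [], y, s, u, by simp, rfl⟩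
  obtain ⟨A, y, B, C, hl, hB⟩ := Nat.find_spec hex
  subst hl
  obtain ⟨hyA, hyB, hyC⟩ := count_decomp2 hc
  rcases Nat.eq_zero_or_pos (Nat.find hex) with h0 | hpos
  · rw [h0] at hB
    rw [List.length_eq_zero_iff.mp hB]
    exact ⟨A, y, C, by simp⟩
  · exfalso
    rcases B with _ | ⟨b, B''⟩
    · simp only [List.length_nil] at hB; omega
    have hby : b ≠ y := fun e => hyB (by simp [e])
    have hcb := hc b (by simp)
    have hsum : A.count b + B''.count b + C.count b = 1 := by
      have e1 : (y :: (b :: B'' ++ y :: C)).count b = 1 + (B''.count b + C.count b) := by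
        simp [List.count_cons, List.count_append, hby, Ne.symm hby]
        omega
      rw [List.count_append, e1] at hcb
      omega
    by_cases hA : b ∈ A
    · obtain ⟨A1, A2, rfl⟩ := List.append_of_mem hA
      apply hncl
      have e : (A1 ++ b :: A2) ++ y :: (b :: B'' ++ y :: C) =
          A1 ++ b :: (A2 ++ y :: ([] ++ b :: (B'' ++ y :: C))) := by simp
      rw [e]
      exact crossing_pattern b y hby A1 A2 [] B'' C
    · by_cases hCm : b ∈ C
      · obtain ⟨C1, C2, rfl⟩ := List.append_of_mem hCm
        apply hncl
        have e : A ++ y :: (b :: B'' ++ y :: (C1 ++ b :: C2)) =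
            A ++ y :: ([] ++ b :: (B'' ++ y :: (C1 ++ b :: C2))) := by simp
        rw [e]
        exact crossing_pattern y b (Ne.symm hby) A [] B'' C1 C2
      · have hBm : b ∈ B'' := by
          have h1 : A.count b = 0 := List.count_eq_zero.mpr hA
          have h2 : C.count b = 0 := List.count_eq_zero.mpr hCm
          exact List.count_pos_iff.mp (by omega)
        obtain ⟨A3, C3, rfl⟩ := List.append_of_mem hBm
        have hlt : A3.length < Nat.find hex := by
          simp only [List.length_cons, List.length_append] at hB
          omega
        exact Nat.find_min hex hlt ⟨A ++ [y], b, A3, C3 ++ y :: C, by simp, rfl⟩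

lemma red_of_ncl : ∀ N, ∀ l : List β, l.length ≤ N →
    (∀ a ∈ l, l.count a = 2) → ¬ Crossing l → Red l := by
  intro N
  induction N with
  | zero =>
    intro l hl _ _
    have e : l = [] := List.length_eq_zero_iff.mp (Nat.le_zero.mp hl)
    subst e
    exact Red.nil
  | succ N ih =>
    intro l hl hc hncl
    rcases eq_or_ne l [] with rfl | hne
    · exact Red.nil
    obtain ⟨A, y, C, rfl⟩ := adjacent_of_ncl l hc hncl hne
    have hrem := counts_remove hc
    have hlen : (A ++ C).length ≤ N := by
      simp only [List.length_append, List.length_cons] at hl ⊢; omega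
    exact Red.cons A y C (ih _ hlen hrem.1 (fun h => hncl (cross_up h)))

lemma pr_iff_ncl (x : β) (l : List β) (hx : x ∉ l) (hc : ∀ a ∈ l, l.count a = 2) :
    Pr x l = 1 ↔ ¬ Crossing l :=
  ⟨fun h1 => ncl_of_red (red_of_pr x l.length l le_rfl hx hc h1) hc,
   fun hncl => Pr_red x (red_of_ncl l.length l le_rfl hc hncl)⟩

end ListLemmas

/-- for a pair equality partition, the product of the Jucys-Murphy
transpositions is the identity iff the partition is non-crossing. -/
theorem identity_iff_noncrossing (n m : ℕ) (α : Fin m → Fin (2*n+1))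
    (hα : ∀ i, α i ≠ jmTop n)
    (hpair : ∀ j : Fin m, Set.ncard {i | α i = α j} = 2) :
    (List.ofFn (jmTuple α)).prod = 1 ↔ Noncrossing (eqPartition α) := by
  classical
  have hx : jmTop n ∉ List.ofFn α := by
    rw [List.mem_ofFn]
    rintro ⟨i, hi⟩
    exact hα i hi
  have hcount : ∀ a, (List.ofFn α).count a = Set.ncard {i | α i = a} := by
    intro a
    rw [Set.ncard_eq_toFinset_card']
    simp only [Set.toFinset_setOf]
    rw [List.ofFn_eq_map, List.count_eq_countP, List.countP_map,
      Finset.card_filter, Fin.sum_univ_def, countP_eq_sum]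
    congr 1
    apply List.map_congr_left
    intro i _
    simp [Function.comp]
  have hc : ∀ a ∈ List.ofFn α, (List.ofFn α).count a = 2 := by
    intro a ha
    rw [List.mem_ofFn] at ha
    obtain ⟨j, rfl⟩ := ha
    rw [hcount]
    exact hpair j
  have hprod : (List.ofFn (jmTuple α)).prod = Pr (jmTop n) (List.ofFn α) := by
    rw [Pr, List.map_ofFn]
    rfl
  have hlen : (List.ofFn α).length = m := List.length_ofFn (f := α)
  have hget : ∀ (k : ℕ) (hk : k < (List.ofFn α).length),
      (List.ofFn α)[k] = α ⟨k, by omega⟩ := by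
    intro k hk
    simp [List.getElem_ofFn]
  have hcross : Crossing (List.ofFn α) ↔ ¬ Noncrossing (eqPartition α) := by
    constructor
    · rintro ⟨i1, j1, i2, j2, h1, h2, h3, h4, e1, e2, ne⟩
      intro hnc
      rw [hlen] at h4
      have b1 : i1 < m := by omega
      have b2 : j1 < m := by omega
      have b3 : i2 < m := by omega
      have b4 : j2 < m := by omega
      have E1 : α ⟨i1, b1⟩ = α ⟨i2, b3⟩ := by
        rw [← List.getElem_ofFn (f := α) (h := by omega), ← List.getElem_ofFn (f := α) (h := by omega)]
        exact e1
      have E2 : α ⟨j1, b2⟩ = α ⟨j2, b4⟩ := by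
        rw [hget j1 (by omega), hget j2 (by omega)] at e2
        exact e2
      have NE : α ⟨i1, b1⟩ ≠ α ⟨j1, b2⟩ := by
        rw [hget i1 (by omega), hget j1 (by omega)] at ne
        exact ne
      have hBne : {i | α i = α ⟨i1, b1⟩} ≠ {i | α i = α ⟨j1, b2⟩} := by
        intro e
        have hm : (⟨i1, b1⟩ : Fin m) ∈ {i | α i = α ⟨i1, b1⟩} := rfl
        rw [e] at hm
        exact NE hm
      exact hnc _ ⟨⟨i1, b1⟩, rfl⟩ _ ⟨⟨j1, b2⟩, rfl⟩ hBne
        ⟨⟨i1, b1⟩, ⟨j1, b2⟩, ⟨i2, b3⟩, ⟨j2, b4⟩, h1, h2, h3, rfl, E1.symm, rfl, E2.symm⟩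
    · intro hnc
      rw [Noncrossing] at hnc
      push_neg at hnc
      obtain ⟨B, hB, B', hB', hBne, k1, l1, k2, l2, h1, h2, h3, m1, m2, m3, m4⟩ := hnc
      obtain ⟨j, rfl⟩ := hB
      obtain ⟨j', rfl⟩ := hB'
      have e1 : α k1 = α k2 := m1.trans m2.symm
      have e2 : α l1 = α l2 := m3.trans m4.symm
      have ne : α k1 ≠ α l1 := by
        intro e
        apply hBne
        ext i
        simp only [Set.mem_setOf_eq]
        rw [← m1, ← m3, e]
      refine ⟨k1, l1, k2, l2, h1, h2, h3, by rw [hlen]; exact l2.isLt, ?_, ?_, ?_⟩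
      · rw [List.getElem_ofFn, List.getElem_ofFn]
        simpa using e1
      · rw [List.getElem_ofFn, List.getElem_ofFn]
        simpa using e2
      · rw [List.getElem_ofFn, List.getElem_ofFn]
        simpa using ne
  rw [hprod, pr_iff_ncl (jmTop n) (List.ofFn α) hx hc, hcross]
  exact not_not

end JM
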